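/- Let a_k = (2k-n)^2 for k = 0,...,\ell where \ell = \lfloor (n-1)/2 \rfloor, and let (c_0,...,c_\ell) be the unique solution of the Vandermonde system \sum_{j=0}^\ell c_j a_k^j = a_k^{\ell+1} for all 0 \le k \le \ell. Then for all m \ge 1, E[S_n^{2m+2\ell+2}] = \sum_{j=0}^\ell c_j 2^{2j-2\ell-2} E[S_n^{2m+2j}], where S_n is the centered Binomial(n,1/2). -/

import Mathlib

/-- The `r`-th moment of the centered Binomial(n, 1/2) random variable. -/
noncomputable def centeredBinomHalfMoment (n r : ℕ) : ℝ :=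
  ∑ k ∈ Finset.range (n + 1),
    (n.choose k : ℝ) * (1 / 2) ^ n * ((k : ℝ) - n / 2) ^ r

theorem stmt_15 (n : ℕ) (hn : 1 ≤ n) (ℓ : ℕ) (hℓ : ℓ = (n - 1) / 2)
    (a : ℕ → ℝ) (ha : ∀ k, a k = (2 * (k : ℝ) - n) ^ 2)
    (c : ℕ → ℝ)
    (hc : ∀ k ≤ ℓ, ∑ j ∈ Finset.range (ℓ + 1), c j * a k ^ j = a k ^ (ℓ + 1)) :
    ∀ m : ℕ, 1 ≤ m →
      centeredBinomHalfMoment n (2 * m + 2 * ℓ + 2) =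
        ∑ j ∈ Finset.range (ℓ + 1),
          c j * (2 : ℝ) ^ (2 * (j : ℤ) - 2 * ℓ - 2) *
            centeredBinomHalfMoment n (2 * m + 2 * j) := by
  intro m hm
  have key : ∀ j : ℕ, (2:ℝ)^(2*(j:ℤ)-2*ℓ-2) = 4^j / 4^(ℓ+1) := by
    intro j
    have e : 2*(j:ℤ)-2*ℓ-2 = ((2*j : ℕ) : ℤ) - ((2*(ℓ+1) : ℕ) : ℤ) := by push_cast; ring
    rw [e, zpow_sub₀ (two_ne_zero), zpow_natCast, zpow_natCast, pow_mul, pow_mul]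
    norm_num
  unfold centeredBinomHalfMoment
  simp only [Finset.mul_sum]
  rw [Finset.sum_comm]
  refine Finset.sum_congr rfl fun k hk => ?_
  have hkn : k ≤ n := Finset.mem_range_succ_iff.mp hk
  by_cases hx : (k : ℝ) - n / 2 = 0
  · rw [hx, zero_pow (by omega : 2*m+2*ℓ+2 ≠ 0), mul_zero, eq_comm]
    refine Finset.sum_eq_zero fun j hj => ?_
    rw [zero_pow (by omega : 2*m+2*j ≠ 0)]
    ring
  · have h2k : 2 * k ≠ n := by
      intro h2
      apply hx
      have := congrArg (Nat.cast : ℕ → ℝ) h2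
      push_cast at this
      linarith
    obtain ⟨k', hk', hak'⟩ : ∃ k' ≤ ℓ, a k' = a k := by
      rcases le_or_gt k ℓ with h | h
      · exact ⟨k, h, rfl⟩
      · refine ⟨n - k, by omega, ?_⟩
        rw [ha, ha, Nat.cast_sub hkn]
        ring
    have hsum : ∑ j ∈ Finset.range (ℓ + 1), c j * a k ^ j = a k ^ (ℓ + 1) := by
      rw [← hak']; exact hc k' hk'
    have hak : a k = 4 * ((k : ℝ) - n / 2) ^ 2 := by rw [ha]; ring
    set x := (k : ℝ) - n / 2 with hxdef
    set C := (n.choose k : ℝ) * (1 / 2) ^ n with hC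
    clear_value x C
    have step : ∀ j ∈ Finset.range (ℓ + 1),
        c j * (2:ℝ)^(2*(j:ℤ)-2*ℓ-2) * (C * x ^ (2*m+2*j))
          = (C * x ^ (2*m) / 4^(ℓ+1)) * (c j * a k ^ j) := by
      intro j _
      rw [key, hak, mul_pow, pow_add, pow_mul]
      ring
    rw [Finset.sum_congr rfl step, ← Finset.mul_sum, hsum, hak, mul_pow]
    have h4 : (4:ℝ)^(ℓ+1) ≠ 0 := by positivity
    field_simp
    rw [show 2*m+2*ℓ+2 = 2*m + 2*(ℓ+1) by ring, pow_add, pow_mul]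
    ring
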